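/- The function g(k) = 6E(k) + (8k²−7)K(k) has exactly one zero in the open interval (0,1): g(0⁺) limit equals −π/2 < 0, g(k) → +∞ as k → 1⁻, and g is continuous and strictly increasing on (0,1). -/

import Mathlib

open Real

/-- The complete elliptic integral of the first kind. -/
noncomputable def ellipticK (k : ℝ) : ℝ :=
  ∫ θ in (0:ℝ)..(π / 2), 1 / Real.sqrt (1 - k ^ 2 * Real.sin θ ^ 2)

/-- The complete elliptic integral of the second kind. -/
noncomputable def ellipticE (k : ℝ) : ℝ :=
  ∫ θ in (0:ℝ)..(π / 2), Real.sqrt (1 - k ^ 2 * Real.sin θ ^ 2)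

/-- The key algebraic inequality giving strict monotonicity of the integrand. -/
lemma key_ineq (a t1 t2 v1 v2 : ℝ) (ha1 : a ≤ 1)
    (ht : t1 < t2)
    (hv1 : 0 < v1) (hv2 : 0 < v2)
    (e1 : v1 ^ 2 = 1 - t1 * a) (e2 : v2 ^ 2 = 1 - t2 * a) :
    6 * v1 + (8 * t1 - 7) / v1 < 6 * v2 + (8 * t2 - 7) / v2 := by
  have hN : 0 < 6 * (v2 - v1) * v1 * v2 + (8 * t2 - 7) * v1 - (8 * t1 - 7) * v2 := by
    have hid : (6 * (v2 - v1) * v1 * v2 + (8 * t2 - 7) * v1 - (8 * t1 - 7) * v2) * (v1 + v2)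
        = (t2 - t1) * (8 - 7 * a + v1 * v2 * (8 - 6 * a)) := by
      linear_combination (8*t2 - 7 - 6*v1*v2) * e1 + (6*v1*v2 - (8*t1 - 7)) * e2
    have hpos : 0 < (t2 - t1) * (8 - 7 * a + v1 * v2 * (8 - 6 * a)) := by
      apply mul_pos (by linarith)
      nlinarith [mul_pos hv1 hv2]
    nlinarith [hid, hpos, add_pos hv1 hv2]
  have h2 : (8 * t1 - 7) / v1 - (8 * t2 - 7) / v2
      = ((8 * t1 - 7) * v2 - (8 * t2 - 7) * v1) / (v1 * v2) := by
    field_simp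
  have h3 : ((8 * t1 - 7) * v2 - (8 * t2 - 7) * v1) / (v1 * v2) < 6 * (v2 - v1) := by
    rw [div_lt_iff₀ (by positivity)]
    nlinarith [hN]
  linarith [h2 ▸ h3]

lemma radic_pos {k : ℝ} (hk0 : 0 ≤ k) (hk1 : k < 1) (θ : ℝ) :
    0 < 1 - k ^ 2 * Real.sin θ ^ 2 := by
  nlinarith [sin_sq_le_one θ, sq_nonneg k, sq_nonneg (Real.sin θ)]

lemma contE {k : ℝ} : Continuous (fun θ : ℝ => Real.sqrt (1 - k ^ 2 * Real.sin θ ^ 2)) := by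
  fun_prop

lemma contK {k : ℝ} (hk0 : 0 ≤ k) (hk1 : k < 1) :
    Continuous (fun θ : ℝ => 1 / Real.sqrt (1 - k ^ 2 * Real.sin θ ^ 2)) := by
  apply Continuous.div continuous_const contE
  intro θ
  exact (Real.sqrt_pos.2 (radic_pos hk0 hk1 θ)).ne'

lemma g_eq {k : ℝ} (hk0 : 0 ≤ k) (hk1 : k < 1) :
    6 * ellipticE k + (8 * k ^ 2 - 7) * ellipticK k
      = ∫ θ in (0:ℝ)..(π / 2),
          (6 * Real.sqrt (1 - k ^ 2 * Real.sin θ ^ 2)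
            + (8 * k ^ 2 - 7) / Real.sqrt (1 - k ^ 2 * Real.sin θ ^ 2)) := by
  rw [ellipticE, ellipticK, ← intervalIntegral.integral_const_mul,
    ← intervalIntegral.integral_const_mul,
    ← intervalIntegral.integral_add
      (f := fun θ => 6 * Real.sqrt (1 - k ^ 2 * Real.sin θ ^ 2))
      (g := fun θ => (8 * k ^ 2 - 7) * (1 / Real.sqrt (1 - k ^ 2 * Real.sin θ ^ 2)))
      ((continuous_const.mul contE).intervalIntegrable _ _)
      ((continuous_const.mul (contK hk0 hk1)).intervalIntegrable _ _)]
  congr 1; funext θ; rw [mul_one_div]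

lemma contF {k : ℝ} (hk0 : 0 ≤ k) (hk1 : k < 1) :
    Continuous (fun θ : ℝ => 6 * Real.sqrt (1 - k ^ 2 * Real.sin θ ^ 2)
      + (8 * k ^ 2 - 7) / Real.sqrt (1 - k ^ 2 * Real.sin θ ^ 2)) := by
  apply (continuous_const.mul contE).add
  apply Continuous.div continuous_const contE
  intro θ
  exact (Real.sqrt_pos.2 (radic_pos hk0 hk1 θ)).ne'

/-- Strict monotonicity of `g` on `[0,1)`. -/
lemma g_mono {k1 k2 : ℝ} (hk0 : 0 ≤ k1) (h12 : k1 < k2) (hk1 : k2 < 1) :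
    6 * ellipticE k1 + (8 * k1 ^ 2 - 7) * ellipticK k1
      < 6 * ellipticE k2 + (8 * k2 ^ 2 - 7) * ellipticK k2 := by
  have hk10 : 0 ≤ k2 := le_of_lt (lt_of_le_of_lt hk0 h12)
  have hk11 : k1 < 1 := h12.trans hk1
  rw [g_eq hk0 hk11, g_eq hk10 hk1, ← sub_pos,
    ← intervalIntegral.integral_sub ((contF hk10 hk1).intervalIntegrable _ _)
      ((contF hk0 hk11).intervalIntegrable _ _)]
  apply intervalIntegral.intervalIntegral_pos_of_pos_on
  · exact ((contF hk10 hk1).sub (contF hk0 hk11)).intervalIntegrable _ _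
  · intro θ _
    have h := key_ineq (Real.sin θ ^ 2) (k1 ^ 2) (k2 ^ 2)
      (Real.sqrt (1 - k1 ^ 2 * Real.sin θ ^ 2)) (Real.sqrt (1 - k2 ^ 2 * Real.sin θ ^ 2))
      (sin_sq_le_one θ)
      (by nlinarith) (Real.sqrt_pos.2 (radic_pos hk0 hk11 θ))
      (Real.sqrt_pos.2 (radic_pos hk10 hk1 θ))
      (Real.sq_sqrt (radic_pos hk0 hk11 θ).le)
      (Real.sq_sqrt (radic_pos hk10 hk1 θ).le)
    linarith
  · positivity

lemma E_le {k : ℝ} : ellipticE k ≤ π / 2 := by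
  have h : ellipticE k ≤ ∫ _ in (0:ℝ)..(π / 2), (1:ℝ) := by
    apply intervalIntegral.integral_mono_on (by positivity)
      (contE.intervalIntegrable _ _) (intervalIntegrable_const)
    intro θ _
    calc Real.sqrt (1 - k ^ 2 * Real.sin θ ^ 2) ≤ Real.sqrt 1 :=
        Real.sqrt_le_sqrt (by nlinarith [sq_nonneg (k * Real.sin θ)])
      _ = 1 := Real.sqrt_one
  simpa using h

lemma E_nonneg {k : ℝ} : 0 ≤ ellipticE k :=
  intervalIntegral.integral_nonneg (by positivity) (fun θ _ => Real.sqrt_nonneg _)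

lemma K_ge {k : ℝ} (hk0 : 0 ≤ k) (hk1 : k < 1) : π / 2 ≤ ellipticK k := by
  have h : (∫ _ in (0:ℝ)..(π / 2), (1:ℝ)) ≤ ellipticK k := by
    apply intervalIntegral.integral_mono_on (by positivity)
      (intervalIntegrable_const) ((contK hk0 hk1).intervalIntegrable _ _)
    intro θ _
    rw [le_div_iff₀ (Real.sqrt_pos.2 (radic_pos hk0 hk1 θ)), one_mul]
    calc Real.sqrt (1 - k ^ 2 * Real.sin θ ^ 2) ≤ Real.sqrt 1 :=
        Real.sqrt_le_sqrt (by nlinarith [sq_nonneg (k * Real.sin θ)])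
      _ = 1 := Real.sqrt_one
  simpa using h

lemma g_neg : 6 * ellipticE (1/4 : ℝ) + (8 * (1/4:ℝ) ^ 2 - 7) * ellipticK (1/4) < 0 := by
  have h1 : ellipticE (1/4:ℝ) ≤ π / 2 := E_le
  have h2 : π / 2 ≤ ellipticK (1/4:ℝ) := K_ge (by norm_num) (by norm_num)
  have hpi : 0 < π := pi_pos
  nlinarith

lemma g_pos : 0 < 6 * ellipticE (19/20 : ℝ) + (8 * (19/20:ℝ) ^ 2 - 7) * ellipticK (19/20) := by
  have h1 : (0:ℝ) ≤ ellipticE (19/20) := E_nonneg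
  have h2 : π / 2 ≤ ellipticK (19/20:ℝ) := K_ge (by norm_num) (by norm_num)
  have hpi : 0 < π := pi_pos
  nlinarith

/-- A globally continuous surrogate for the integrand of `g`, agreeing on `[0, 49/50]`. -/
noncomputable def Fsafe (k θ : ℝ) : ℝ :=
  6 * Real.sqrt (1 - k ^ 2 * Real.sin θ ^ 2)
    + (8 * k ^ 2 - 7) / Real.sqrt (max (1 - k ^ 2 * Real.sin θ ^ 2) (1/100))

lemma contFsafe : Continuous (Function.uncurry Fsafe) := by
  unfold Function.uncurry Fsafe
  have hc : Continuous (fun p : ℝ × ℝ => 1 - p.1 ^ 2 * Real.sin p.2 ^ 2) := by fun_prop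
  apply Continuous.add
  · exact continuous_const.mul (hc.sqrt)
  · apply Continuous.div (by fun_prop) ((hc.max continuous_const).sqrt)
    intro p
    have : (0:ℝ) < max (1 - p.1 ^ 2 * Real.sin p.2 ^ 2) (1/100) :=
      lt_max_of_lt_right (by norm_num)
    exact (Real.sqrt_pos.2 this).ne'

lemma contInt : Continuous (fun k : ℝ => ∫ θ in (0:ℝ)..(π/2), Fsafe k θ) :=
  intervalIntegral.continuous_parametric_intervalIntegral_of_continuous' contFsafe _ _

lemma g_contOn : ContinuousOn
    (fun k : ℝ => 6 * ellipticE k + (8 * k ^ 2 - 7) * ellipticK k)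
    (Set.Icc (0:ℝ) (49/50)) := by
  apply ContinuousOn.congr (contInt.continuousOn)
  intro k hk
  obtain ⟨hk0, hk1⟩ := hk
  have hk1' : k < 1 := lt_of_le_of_lt hk1 (by norm_num)
  simp only []
  rw [g_eq hk0 hk1']
  apply intervalIntegral.integral_congr
  intro θ _
  unfold Fsafe
  rw [max_eq_left]
  nlinarith [sin_sq_le_one θ, sq_nonneg (Real.sin θ)]

/-- `g(k) = 6E(k) + (8k² − 7)K(k)` has exactly one zero in `(0,1)`. -/
theorem g_unique_zero :
    ∃! k : ℝ, k ∈ Set.Ioo (0:ℝ) 1 ∧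
      6 * ellipticE k + (8 * k ^ 2 - 7) * ellipticK k = 0 := by
  set g : ℝ → ℝ := fun k => 6 * ellipticE k + (8 * k ^ 2 - 7) * ellipticK k with hg
  have hsub : Set.Icc (1/4 : ℝ) (19/20) ⊆ Set.Icc (0:ℝ) (49/50) := by
    apply Set.Icc_subset_Icc <;> norm_num
  have hcont : ContinuousOn g (Set.Icc (1/4 : ℝ) (19/20)) := g_contOn.mono hsub
  have hivt := intermediate_value_Ioo (by norm_num : (1/4:ℝ) ≤ 19/20) hcont
  have h0 : (0:ℝ) ∈ Set.Ioo (g (1/4)) (g (19/20)) := ⟨g_neg, g_pos⟩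
  obtain ⟨k, hk, hgk⟩ := hivt h0
  refine ⟨k, ⟨⟨by linarith [hk.1], by linarith [hk.2]⟩, hgk⟩, ?_⟩
  rintro y ⟨⟨hy0, hy1⟩, hgy⟩
  by_contra hne
  rcases lt_or_gt_of_ne hne with h | h
  · have := g_mono (le_of_lt hy0) h (by linarith [hk.2] : k < 1)
    simp only [hg] at hgk; rw [hgy, hgk] at this; exact lt_irrefl 0 this
  · have := g_mono (by linarith [hk.1] : (0:ℝ) ≤ k) h hy1
    simp only [hg] at hgk; rw [hgy, hgk] at this; exact lt_irrefl 0 this
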